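/- Let SemiTh be the category of semi-theories (morphisms are functors that are the identity on objects and send projections to the corresponding projections) and AlgTh the full subcategory of algebraic theories, with R : AlgTh → SemiTh the inclusion (forgetful) functor. Then R admits a left adjoint L : SemiTh → AlgTh, and for every semi-theory C the unit η_C : C → RL C induces an isomorphism of strict-algebra categories η_C^* : Alg^{RLC} → Alg^C. -/

import Mathlib

open CategoryTheory Limits Topology Topology.Homotopy

noncomputable section

namespace SemiThPaper

/-! ### Weak homotopy equivalences -/

/-- The map induced by a continuous map on homotopy "groups" (sets for `N = Fin 0`). -/
def HomotopyGroup.map {X Y : Type} [TopologicalSpace X] [TopologicalSpace Y]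
    (f : C(X, Y)) (N : Type) (x : X) :
    HomotopyGroup N X x → HomotopyGroup N Y (f x) :=
  Quotient.map
    (fun g => ⟨f.comp g.1, fun y hy => by
      simp only [ContinuousMap.comp_apply]
      rw [g.2 y hy]⟩)
    (fun g h H => H.elim fun H => ⟨H.compContinuousMap f⟩)

/-- The map induced on path components. -/
def ZerothHomotopy.map {X Y : Type} [TopologicalSpace X] [TopologicalSpace Y]
    (f : C(X, Y)) : ZerothHomotopy X → ZerothHomotopy Y :=
  Quotient.map f (fun _ _ h => h.elim fun γ => ⟨γ.map f.continuous⟩)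

/-- A weak homotopy equivalence of topological spaces: a continuous map inducing a
bijection on path components and on all homotopy groups at all basepoints. -/
def IsWeakHomotopyEquiv {X Y : TopCat} (f : X ⟶ Y) : Prop :=
  Function.Bijective (ZerothHomotopy.map (f.hom : C(X, Y))) ∧
    ∀ (n : ℕ) (x : X), Function.Bijective (HomotopyGroup.map (f.hom : C(X, Y)) (Fin n) x)

/-- A weak equivalence of simplicial sets: a map whose geometric realization is a
weak homotopy equivalence. -/
def WeakEquiv {A B : SSet} (f : A ⟶ B) : Prop :=
  IsWeakHomotopyEquiv (SSet.toTop.map f)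


/-! ### Semi-theories -/

/-- The objects `[1], [2], [3], …` of a semi-theory, indexed by positive integers. -/
@[ext]
structure Ob : Type where
  val : ℕ+

instance : Coe ℕ+ Ob := ⟨Ob.mk⟩

/-- An (unpointed) semi-theory: a category with objects `[1], [2], …`
together with distinguished projection morphisms `p^n_k : [n] ⟶ [1]`, where `p^1_1 = 𝟙 [1]`. -/
structure SemiTheory : Type 1 where
  cat : Category.{0, 0} Ob
  proj : ∀ n : ℕ+, Fin n → @Quiver.Hom Ob cat.toCategoryStruct.toQuiver ⟨n⟩ ⟨1⟩
  proj_one : proj 1 ⟨0, Nat.one_pos⟩ = cat.toCategoryStruct.id ⟨1⟩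

/-- The category of diagrams of simplicial sets over (the underlying category of)
a semi-theory. -/
abbrev SemiTheory.Diag (S : SemiTheory) : Type 1 :=
  @CategoryTheory.Functor Ob S.cat SSet _

/-- The `n`-fold levelwise power of a simplicial set. -/
@[simps]
def finPow (n : ℕ+) (A : SSet) : SSet where
  obj m := Fin n → A.obj m
  map θ := ↾(fun a k => A.map θ (a k))

/-- The canonical comparison map `X[n] ⟶ X[1]^n` of a diagram over a semi-theory,
whose components are induced by the projections. -/
def SemiTheory.projFan (S : SemiTheory) (X : S.Diag) (n : ℕ+) :
    (letI := S.cat; (X.obj ⟨n⟩ ⟶ finPow n (X.obj ⟨1⟩))) :=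
  letI := S.cat
  { app := fun m => ↾(fun a k => (X.map (S.proj n k)).app m a)
    naturality := fun m m' θ => by
      refine TypeCat.homEquiv.injective (funext fun a => ?_)
      funext k
      first
        | exact (FunctorToTypes.naturality (X.map (S.proj n k)) θ a).symm
        | exact FunctorToTypes.naturality (X.map (S.proj n k)) θ a }

/-- A strict algebra over a semi-theory: the comparison maps `X[n] ⟶ X[1]^n` are
isomorphisms for all `n > 1`. -/
def SemiTheory.IsStrictAlgebra (S : SemiTheory) (X : S.Diag) : Prop :=
  ∀ n : ℕ+, 1 < (n : ℕ) → IsIso (S.projFan X n)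

/-- A homotopy algebra over a semi-theory: the comparison maps `X[n] ⟶ X[1]^n` are
weak equivalences of simplicial sets for all `n > 1`. -/
def SemiTheory.IsHomotopyAlgebra (S : SemiTheory) (X : S.Diag) : Prop :=
  ∀ n : ℕ+, 1 < (n : ℕ) → WeakEquiv (S.projFan X n)

/-- A semi-theory is an algebraic theory if composition with the projections induces
bijections `Hom([m],[n]) ≅ Hom([m],[1])^n` for all `m` and all `n > 1`. -/
def SemiTheory.IsAlgebraic (S : SemiTheory) : Prop :=
  letI := S.cat
  ∀ (m n : ℕ+), 1 < (n : ℕ) →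
    Function.Bijective (fun (f : (⟨m⟩ : Ob) ⟶ ⟨n⟩) (k : Fin n) => f ≫ S.proj n k)

/-- The comparison map `X[n] ⟶ X[1]^n` for a diagram of simplicial sets over any
category equipped with objects `[n]` and projection morphisms. -/
def projFanAt {C : Type} [Category.{0} C] (o : ℕ+ → C) (p : ∀ n : ℕ+, Fin n → (o n ⟶ o 1))
    (X : C ⥤ SSet) (n : ℕ+) : X.obj (o n) ⟶ finPow n (X.obj (o 1)) where
  app m := ↾(fun a k => (X.map (p n k)).app m a)
  naturality m m' θ := by
    refine TypeCat.homEquiv.injective (funext fun a => ?_)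
    funext k
    first
      | exact (FunctorToTypes.naturality (X.map (p n k)) θ a).symm
      | exact FunctorToTypes.naturality (X.map (p n k)) θ a

/-- Strictness of a diagram with respect to given objects and projections. -/
def IsStrictAt {C : Type} [Category.{0} C] (o : ℕ+ → C)
    (p : ∀ n : ℕ+, Fin n → (o n ⟶ o 1)) (X : C ⥤ SSet) : Prop :=
  ∀ n : ℕ+, 1 < (n : ℕ) → IsIso (projFanAt o p X n)

/-- The homotopy-algebra condition for a diagram with respect to given objects
and projections. -/
def IsHomotopyAt {C : Type} [Category.{0} C] (o : ℕ+ → C)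
    (p : ∀ n : ℕ+, Fin n → (o n ⟶ o 1)) (X : C ⥤ SSet) : Prop :=
  ∀ n : ℕ+, 1 < (n : ℕ) → WeakEquiv (projFanAt o p X n)

/-! ### Free semi-theories -/

/-- Generating data for a free semi-theory: a family of free generators that are
not projections (the projections are added separately as free generators). -/
structure GenData : Type 1 where
  gen : ℕ+ → ℕ+ → Type

/-- The generating quiver of the free semi-theory on `G`: the generators of `G`
together with projection arrows `p^n_k : [n] → [1]` for `n > 1`
(the projection `p^1_1` is the identity, i.e. the empty path). -/
inductive Arr (G : GenData) : ℕ+ → ℕ+ → Type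
  | gen {a b : ℕ+} : G.gen a b → Arr G a b
  | proj {n : ℕ+} (h : 1 < (n : ℕ)) (k : Fin n) : Arr G n 1

/-- The object type of the free semi-theory on `G` (a copy of `Ob`). -/
def FreeOb (G : GenData) : Type := Ob

instance freeQuiver (G : GenData) : Quiver (FreeOb G) :=
  ⟨fun a b => Arr G (Ob.val a) (Ob.val b)⟩

/-- The free semi-theory on `G`, as a category: the paths category on the
generating quiver. -/
abbrev FreeST (G : GenData) := CategoryTheory.Paths (FreeOb G)

/-- The object `[n]` of the free semi-theory. -/
def FreeST.of (G : GenData) (n : ℕ+) : FreeST G := (⟨n⟩ : Ob)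

/-- The generating projection arrow, as an arrow of the generating quiver. -/
def projArr (G : GenData) {n : ℕ+} (h : 1 < (n : ℕ)) (k : Fin n) :
    @Quiver.Hom (FreeOb G) _ (FreeST.of G n) (FreeST.of G 1) := Arr.proj h k

/-- The projection `p^n_k` in the free semi-theory. -/
def projPath (G : GenData) (n : ℕ+) (k : Fin n) : FreeST.of G n ⟶ FreeST.of G 1 :=
  if h : 1 < (n : ℕ) then (projArr G h k).toPath
  else eqToHom (congrArg (FreeST.of G)
    (PNat.coe_injective (by
      rw [PNat.one_coe]
      exact le_antisymm (not_lt.1 h) n.pos)))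

/-- The free semi-theory on `G`, as a semi-theory. -/
def freeSemiTheory (G : GenData) : SemiTheory where
  cat := inferInstanceAs (Category (FreeST G))
  proj n k := projPath G n k
  proj_one := by
    show projPath G 1 ⟨0, Nat.one_pos⟩ = _
    rw [projPath, dif_neg (by norm_num)]
    rfl

/-- The initial semi-theory `P` has no generators besides the projections. -/
def emptyGen : GenData := ⟨fun _ _ => PEmpty⟩

/-- The underlying category of the initial semi-theory `P`. -/
abbrev PCat := FreeST emptyGen

/-- The initial semi-theory `P`: its only non-identity morphisms are the projections. -/
def PTheory : SemiTheory := freeSemiTheory emptyGen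

/-- The action of the unique morphism of semi-theories `P ⟶ C` on generating arrows. -/
def jArr (G : GenData) : ∀ {a b : ℕ+}, Arr emptyGen a b →
    @Quiver.Path (FreeOb G) _ ((⟨a⟩ : Ob) : FreeST G) ((⟨b⟩ : Ob) : FreeST G)
  | _, _, .gen α => α.elim
  | _, _, .proj h k => (projArr G h k).toPath

/-- The unique morphism of semi-theories `P ⟶ C` into a free semi-theory. -/
def Jfree (G : GenData) : PCat ⥤ FreeST G :=
  Paths.lift
    { obj := fun n => (n : FreeST G)
      map := fun {a b} e => jArr G e }

/-! ### The completion of a free semi-theory -/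

/-- Trees representing the morphisms `[n] ⟶ [1]` of the completion `C̄` of a free
semi-theory: either a single edge labelled by a projection `p^n_k`, or a tree whose
lowest edge is labelled by a component `α_i` of a non-projection generator
`α : [m] ⟶ [r]` and which is obtained by grafting `m` smaller trees. -/
inductive CTree (G : GenData) (n : ℕ+) : Type
  | proj (k : Fin n) : CTree G n
  | node {m r : ℕ+} (α : G.gen m r) (i : Fin r) (ts : Fin m → CTree G n) : CTree G n

/-- Morphisms `[n] ⟶ [m]` in the completion: `m`-tuples of trees. -/
def CompHom (G : GenData) (n m : ℕ+) : Type := Fin m → CTree G n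

/-- Grafting: substituting the trees `T k` for the initial edges labelled `p^m_k`. -/
def CTree.graft {G : GenData} {n m : ℕ+} : CTree G m → CompHom G n m → CTree G n
  | .proj k, T => T k
  | .node α i ts, T => .node α i (fun j => (ts j).graft T)

/-- The identity of the completion. -/
def compId (G : GenData) (n : ℕ+) : CompHom G n n := fun k => .proj k

/-- Composition in the completion, by grafting. -/
def compComp {G : GenData} {a b c : ℕ+} (T : CompHom G a b) (S : CompHom G b c) :
    CompHom G a c :=
  fun j => (S j).graft T

theorem CTree.graft_id {G : GenData} {m : ℕ+} (t : CTree G m) :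
    t.graft (compId G m) = t := by
  induction t with
  | proj k => rfl
  | node α i ts ih =>
      simp only [CTree.graft]
      congr 1
      funext j
      exact ih j

theorem CTree.graft_graft {G : GenData} {a b c : ℕ+} (s : CTree G c)
    (U : CompHom G b c) (T : CompHom G a b) :
    (s.graft U).graft T = s.graft (compComp T U) := by
  induction s with
  | proj k => rfl
  | node α i ts ih =>
      simp only [CTree.graft]
      congr 1
      funext j
      exact ih j

/-- The object type of the completion (a copy of `Ob`). -/
def CompOb (G : GenData) : Type := Ob

/-- The completion `C̄` of a free semi-theory, as a category. -/
instance compCategory (G : GenData) : Category (CompOb G) where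
  Hom n m := CompHom G (Ob.val n) (Ob.val m)
  id n := compId G _
  comp f g := compComp f g
  id_comp f := funext fun j => CTree.graft_id _
  comp_id f := rfl
  assoc f g h := funext fun j => (CTree.graft_graft _ _ _).symm

/-- The object `[n]` of the completion. -/
def CompOb.of (G : GenData) (n : ℕ+) : CompOb G := (⟨n⟩ : Ob)

/-- The projection `p̂^n_k` of the completion: a single edge labelled `p^n_k`. -/
def compProj (G : GenData) (n : ℕ+) (k : Fin n) : CompOb.of G n ⟶ CompOb.of G 1 :=
  fun _ => .proj k

/-- The completion, as a semi-theory. -/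
def compSemiTheory (G : GenData) : SemiTheory where
  cat := inferInstanceAs (Category (CompOb G))
  proj n k := compProj G n k
  proj_one := by
    funext i
    have h0 : i = ⟨0, Nat.one_pos⟩ := Fin.ext (Nat.lt_one_iff.mp i.isLt)
    rw [h0]
    rfl

/-- The completion functor `Φ` on generating arrows. -/
def phiArr (G : GenData) : ∀ {a b : ℕ+}, Arr G a b → CompHom G a b
  | _, _, .gen α => fun i => .node α i (fun k => .proj k)
  | _, _, .proj _ k => fun _ => .proj k

/-- The completion functor `Φ_C : C ⟶ C̄` of a free semi-theory. -/
def phi (G : GenData) : FreeST G ⥤ CompOb G :=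
  Paths.lift
    { obj := fun n => (n : CompOb G)
      map := fun {a b} e => phiArr G e }

/-! ### Discrete simplicial sets, products, mapping complexes -/

/-- The discrete simplicial set on a type. -/
@[simps]
def disc (A : Type) : SSet where
  obj _ := A
  map _ := ↾id

/-- The map of discrete simplicial sets induced by a function. -/
@[simps]
def disc.map {A B : Type} (f : A → B) : disc A ⟶ disc B where
  app _ := ↾f

/-- The diagram of (discrete) simplicial sets corepresented by the object `[n]`
of a semi-theory. -/
def SemiTheory.corep (S : SemiTheory) (n : ℕ+) : S.Diag :=
  letI := S.cat
  { obj := fun m => disc ((⟨n⟩ : Ob) ⟶ m)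
    map := fun f => disc.map (fun g => g ≫ f)
    map_id := fun m => by
      apply NatTrans.ext
      funext x
      refine TypeCat.homEquiv.injective (funext fun g => ?_)
      show g ≫ 𝟙 m = g
      exact Category.comp_id _
    map_comp := fun f f' => by
      apply NatTrans.ext
      funext x
      refine TypeCat.homEquiv.injective (funext fun g => ?_)
      show g ≫ (_ ≫ _) = _
      exact (Category.assoc _ _ _).symm }

/-- Levelwise product of two simplicial sets. -/
@[simps]
def mulC (A K : SSet) : SSet where
  obj m := A.obj m × K.obj m
  map θ := ↾(fun p => (A.map θ p.1, K.map θ p.2))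
  map_id m := by refine TypeCat.homEquiv.injective (funext fun p => ?_); simp
  map_comp f g := by refine TypeCat.homEquiv.injective (funext fun p => ?_); simp

/-- `f × id` on levelwise products. -/
@[simps]
def mulC.mapLeft {A B : SSet} (f : A ⟶ B) (K : SSet) : mulC A K ⟶ mulC B K where
  app m := ↾(fun p => (f.app m p.1, p.2))
  naturality m m' θ := by
    refine TypeCat.homEquiv.injective (funext fun p => ?_)
    show (f.app m' (A.map θ p.1), K.map θ p.2) = (B.map θ (f.app m p.1), K.map θ p.2)
    congr 1
    first
      | exact (FunctorToTypes.naturality f θ p.1).symm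
      | exact FunctorToTypes.naturality f θ p.1

/-- `id × g` on levelwise products. -/
@[simps]
def mulC.mapRight (A : SSet) {K L : SSet} (g : K ⟶ L) : mulC A K ⟶ mulC A L where
  app m := ↾(fun p => (p.1, g.app m p.2))
  naturality m m' θ := by
    refine TypeCat.homEquiv.injective (funext fun p => ?_)
    show (A.map θ p.1, g.app m' (K.map θ p.2)) = (A.map θ p.1, L.map θ (g.app m p.2))
    congr 1
    first
      | exact (FunctorToTypes.naturality g θ p.2).symm
      | exact FunctorToTypes.naturality g θ p.2

theorem mulC.mapRight_id (A K : SSet) : mulC.mapRight A (𝟙 K) = 𝟙 (mulC A K) := by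
  apply NatTrans.ext; funext x; rfl

theorem mulC.mapRight_comp (A : SSet) {K L M : SSet} (g : K ⟶ L) (h : L ⟶ M) :
    mulC.mapRight A (g ≫ h) = mulC.mapRight A g ≫ mulC.mapRight A h := by
  apply NatTrans.ext; funext x; rfl

/-- Naturality, in applied form. -/
theorem natApply {C : Type} [Category C] {X Y : C ⥤ SSet} (f : X ⟶ Y)
    {c c' : C} (φ : c ⟶ c') (x : SimplexCategoryᵒᵖ) (a : (X.obj c).obj x) :
    (f.app c').app x ((X.map φ).app x a) = (Y.map φ).app x ((f.app c).app x a) :=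
  congrArg (fun g : (X.obj c).obj x ⟶ (Y.obj c').obj x => g a)
    (NatTrans.congr_app (f.naturality φ) x)

/-- The objectwise product of a diagram of simplicial sets with a constant
simplicial set. -/
@[simps]
def prodConst {C : Type} [Category C] (X : C ⥤ SSet) (K : SSet) : C ⥤ SSet where
  obj c := mulC (X.obj c) K
  map f := mulC.mapLeft (X.map f) K
  map_id c := by
    apply NatTrans.ext; funext x
    refine TypeCat.homEquiv.injective (funext fun p => ?_)
    show ((X.map (𝟙 c)).app x p.1, p.2) = p
    rw [X.map_id]
    rfl
  map_comp f g := by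
    apply NatTrans.ext; funext x
    refine TypeCat.homEquiv.injective (funext fun p => ?_)
    show ((X.map (f ≫ g)).app x p.1, p.2) = _
    rw [X.map_comp]
    rfl

/-- Functoriality of `prodConst` in the diagram variable. -/
@[simps]
def prodConst.mapX {C : Type} [Category C] {X X' : C ⥤ SSet} (f : X ⟶ X') (K : SSet) :
    prodConst X K ⟶ prodConst X' K where
  app c := mulC.mapLeft (f.app c) K
  naturality c c' φ := by
    apply NatTrans.ext; funext x
    refine TypeCat.homEquiv.injective (funext fun p => ?_)
    first
      | exact Prod.ext (natApply f φ x p.1) rfl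
      | exact Prod.ext (natApply f φ x p.1).symm rfl

/-- Functoriality of `prodConst` in the constant variable. -/
@[simps]
def prodConst.mapK {C : Type} [Category C] (X : C ⥤ SSet) {K L : SSet} (g : K ⟶ L) :
    prodConst X K ⟶ prodConst X L where
  app c := mulC.mapRight (X.obj c) g
  naturality c c' φ := by
    apply NatTrans.ext; funext x
    rfl

theorem prodConst.mapK_id {C : Type} [Category C] (X : C ⥤ SSet) (K : SSet) :
    prodConst.mapK X (𝟙 K) = 𝟙 (prodConst X K) := by
  apply NatTrans.ext; funext c
  exact mulC.mapRight_id _ _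

theorem prodConst.mapK_comp {C : Type} [Category C] (X : C ⥤ SSet) {K L M : SSet}
    (g : K ⟶ L) (h : L ⟶ M) :
    prodConst.mapK X (g ≫ h) = prodConst.mapK X g ≫ prodConst.mapK X h := by
  apply NatTrans.ext; funext c
  exact mulC.mapRight_comp _ _ _

/-- The standard simplex `Δ[k]`, for `k : SimplexCategoryᵒᵖ`. -/
def stdS (k : SimplexCategoryᵒᵖ) : SSet := SSet.stdSimplex.obj k.unop

/-- Functoriality of the standard simplex (contravariantly in `SimplexCategoryᵒᵖ`). -/
def stdMap {k l : SimplexCategoryᵒᵖ} (θ : k ⟶ l) : stdS l ⟶ stdS k :=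
  SSet.stdSimplex.map θ.unop

theorem stdMap_id (k : SimplexCategoryᵒᵖ) : stdMap (𝟙 k) = 𝟙 (stdS k) :=
  SSet.stdSimplex.map_id _

theorem stdMap_comp {k l m : SimplexCategoryᵒᵖ} (θ : k ⟶ l) (η : l ⟶ m) :
    stdMap (θ ≫ η) = stdMap η ≫ stdMap θ :=
  SSet.stdSimplex.map_comp _ _

/-- The simplicial mapping complex of two diagrams of simplicial sets: its
`m`-simplices are the natural transformations `X × Δ[m] ⟶ Y`. -/
def MapCx {C : Type} [Category C] (X Y : C ⥤ SSet) : SSet where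
  obj m := prodConst X (stdS m) ⟶ Y
  map {m m'} θ := ↾(fun t => prodConst.mapK X (stdMap θ) ≫ t)
  map_id m := by
    refine TypeCat.homEquiv.injective (funext fun t => ?_)
    simp [stdMap_id, prodConst.mapK_id]
  map_comp θ η := by
    refine TypeCat.homEquiv.injective (funext fun t => ?_)
    simp [stdMap_comp, prodConst.mapK_comp]

/-- Precomposition on mapping complexes. -/
def MapCx.pre {C : Type} [Category C] {X X' : C ⥤ SSet} (f : X' ⟶ X) (Y : C ⥤ SSet) :
    MapCx X Y ⟶ MapCx X' Y where
  app m := ↾(fun t => prodConst.mapX f (stdS m) ≫ t)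
  naturality m m' θ := by
    rfl

/-- Postcomposition on mapping complexes. -/
def MapCx.post {C : Type} [Category C] (X : C ⥤ SSet) {Y Y' : C ⥤ SSet} (g : Y ⟶ Y') :
    MapCx X Y ⟶ MapCx X Y' where
  app m := ↾(fun t => t ≫ g)
  naturality m m' θ := by
    rfl

/-- Restriction of mapping complexes along a functor. -/
def MapCx.whisk {C D : Type} [Category C] [Category D] (F : D ⥤ C) (X Y : C ⥤ SSet) :
    MapCx X Y ⟶ MapCx (F ⋙ X) (F ⋙ Y) where
  app m := ↾(fun t =>
    (show prodConst (F ⋙ X) (stdS m) ⟶ F ⋙ Y from CategoryTheory.Functor.whiskerLeft F t))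
  naturality m m' θ := by
    rfl

/-- The simplicial mapping complex of two simplicial sets: its `m`-simplices are
the maps `A × Δ[m] ⟶ B`. -/
def sMap (A B : SSet) : SSet where
  obj m := mulC A (stdS m) ⟶ B
  map {m m'} θ := ↾(fun t => mulC.mapRight A (stdMap θ) ≫ t)
  map_id m := by
    refine TypeCat.homEquiv.injective (funext fun t => ?_)
    simp [stdMap_id, mulC.mapRight_id]
  map_comp θ η := by
    refine TypeCat.homEquiv.injective (funext fun t => ?_)
    simp [stdMap_comp, mulC.mapRight_comp]

/-- Precomposition on simplicial mapping complexes. -/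
def sMap.pre {A A' : SSet} (f : A' ⟶ A) (B : SSet) : sMap A B ⟶ sMap A' B where
  app m := ↾(fun t => mulC.mapLeft f (stdS m) ≫ t)
  naturality m m' θ := by
    rfl

/-- Postcomposition on simplicial mapping complexes. -/
def sMap.post (A : SSet) {B B' : SSet} (g : B ⟶ B') : sMap A B ⟶ sMap A B' where
  app m := ↾(fun t => t ≫ g)
  naturality m m' θ := by
    rfl

/-! ### Strict-algebra categories and the category of semi-theories -/

/-- The Yoneda-type map `C_1 ⟶ C_m` of corepresented diagrams corresponding to the
projection `p^m_j` (given by precomposition with `p^m_j`). -/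
def SemiTheory.projYoneda (S : SemiTheory) (m : ℕ+) (j : Fin m) :
    (letI := S.cat; (S.corep 1 ⟶ S.corep m)) :=
  letI := S.cat
  { app := fun r => disc.map (fun g => S.proj m j ≫ g)
    naturality := fun r r' f => by
      apply NatTrans.ext
      funext x
      refine TypeCat.homEquiv.injective (funext fun g => ?_)
      exact (Category.assoc _ _ _).symm }

/-- The category of strict algebras over a semi-theory. -/
def SemiTheory.Alg (S : SemiTheory) : Type 1 :=
  letI := S.cat
  ObjectProperty.FullSubcategory S.IsStrictAlgebra

instance SemiTheory.algCategory (S : SemiTheory) : Category S.Alg :=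
  letI := S.cat
  inferInstanceAs (Category (ObjectProperty.FullSubcategory S.IsStrictAlgebra))

/-- The inclusion `J_C` of the strict algebras into all diagrams. -/
def SemiTheory.algIncl (S : SemiTheory) : S.Alg ⥤ S.Diag :=
  letI := S.cat
  ObjectProperty.ι S.IsStrictAlgebra

/-- Object part of a functor, with explicit category instances (avoiding
instance-resolution issues when several category structures live on one type). -/
def fobj {C D : Type} {iC : Category.{0} C} {iD : Category.{0} D}
    (F : @CategoryTheory.Functor C iC D iD) (a : C) : D :=
  @Prefunctor.obj C iC.toCategoryStruct.toQuiver D iD.toCategoryStruct.toQuiver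
    (@CategoryTheory.Functor.toPrefunctor C iC D iD F) a

/-- Morphism part of a functor, with explicit category instances. -/
def fmap {C D : Type} {iC : Category.{0} C} {iD : Category.{0} D}
    (F : @CategoryTheory.Functor C iC D iD) {a b : C}
    (f : @Quiver.Hom C iC.toCategoryStruct.toQuiver a b) :
    @Quiver.Hom D iD.toCategoryStruct.toQuiver (fobj F a) (fobj F b) :=
  @Prefunctor.map C iC.toCategoryStruct.toQuiver D iD.toCategoryStruct.toQuiver
    (@CategoryTheory.Functor.toPrefunctor C iC D iD F) a b f

/-- A morphism of semi-theories: a functor which is the identity on objects and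
sends projections to the corresponding projections. -/
structure STHom (S T : SemiTheory) : Type where
  func : @CategoryTheory.Functor Ob S.cat Ob T.cat
  obj_eq : ∀ n : Ob, fobj func n = n
  proj_eq : ∀ (n : ℕ+) (k : Fin n),
    fmap func (S.proj n k) =
      (letI := T.cat; eqToHom (obj_eq ⟨n⟩) ≫ T.proj n k ≫ eqToHom (obj_eq ⟨1⟩).symm)

theorem fmap_comp {C D : Type} {iC : Category.{0} C} {iD : Category.{0} D}
    (F : @CategoryTheory.Functor C iC D iD) {a b c : C}
    (f : @Quiver.Hom C iC.toCategoryStruct.toQuiver a b)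
    (g : @Quiver.Hom C iC.toCategoryStruct.toQuiver b c) :
    fmap F (@CategoryStruct.comp C iC.toCategoryStruct a b c f g)
      = @CategoryStruct.comp D iD.toCategoryStruct _ _ _ (fmap F f) (fmap F g) :=
  @CategoryTheory.Functor.map_comp C iC D iD F a b c f g

theorem fmap_eqToHom {C D : Type} {iC : Category.{0} C} {iD : Category.{0} D}
    (F : @CategoryTheory.Functor C iC D iD) {a b : C} (h : a = b) :
    fmap F (@eqToHom C iC.toCategoryStruct a b h)
      = @eqToHom D iD.toCategoryStruct (fobj F a) (fobj F b) (congrArg (fobj F) h) := by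
  subst h
  show fmap F (@CategoryStruct.id C iC.toCategoryStruct a) = _
  exact @CategoryTheory.Functor.map_id C iC D iD F a

theorem STHom.ext' {S T : SemiTheory} {f g : STHom S T} (h : f.func = g.func) : f = g := by
  cases f; cases g; cases h; rfl

/-- The category of semi-theories. -/
instance : Category SemiTheory where
  Hom := STHom
  id S :=
    { func := @CategoryTheory.Functor.id Ob S.cat
      obj_eq := fun _ => rfl
      proj_eq := fun n k => by
        letI := S.cat
        show S.proj n k = 𝟙 _ ≫ S.proj n k ≫ 𝟙 _
        simp }
  comp {S T U} f g :=
    { func := @CategoryTheory.Functor.comp Ob S.cat Ob T.cat Ob U.cat f.func g.func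
      obj_eq := fun n => by
        show fobj g.func (fobj f.func n) = n
        rw [f.obj_eq, g.obj_eq]
      proj_eq := fun n k => by
        letI := U.cat
        show fmap g.func (fmap f.func (S.proj n k)) = _
        rw [f.proj_eq n k, fmap_comp, fmap_comp, fmap_eqToHom, fmap_eqToHom,
          g.proj_eq n k]
        simp [Category.assoc, eqToHom_trans]
        all_goals rfl }
  id_comp {S T} f := STHom.ext' (@CategoryTheory.Functor.id_comp Ob S.cat Ob T.cat f.func)
  comp_id {S T} f := STHom.ext' (@CategoryTheory.Functor.comp_id Ob S.cat Ob T.cat f.func)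
  assoc {S T U V} f g h :=
    STHom.ext' (@CategoryTheory.Functor.assoc Ob S.cat Ob T.cat Ob U.cat Ob V.cat
      f.func g.func h.func)


/-- Restriction of a diagram along a morphism of semi-theories. -/
def STHom.restrict {S T : SemiTheory} (f : STHom S T) (A : T.Diag) : S.Diag :=
  @CategoryTheory.Functor.comp Ob S.cat Ob T.cat SSet _ f.func A

/-- Restriction of a morphism of diagrams along a morphism of semi-theories. -/
def STHom.restrictMap {S T : SemiTheory} (f : STHom S T) {A B : T.Diag} (φ : A ⟶ B) :
    f.restrict A ⟶ f.restrict B :=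
  @CategoryTheory.Functor.whiskerLeft Ob S.cat Ob T.cat SSet _ f.func A B φ

/-- A morphism of semi-theories `f : S ⟶ T` induces, by restriction, an isomorphism
between the categories of strict algebras of `T` and `S`. -/
def STHom.inducesAlgebraIso {S T : SemiTheory} (f : STHom S T) : Prop :=
  ∃ (F : T.Alg ⥤ S.Alg) (F' : S.Alg ⥤ T.Alg)
    (hobj : ∀ A : T.Alg, (F.obj A).obj = f.restrict A.obj),
    (∀ (A B : T.Alg) (φ : A ⟶ B),
      (F.map φ).hom = eqToHom (hobj A) ≫ f.restrictMap φ.hom ≫ eqToHom (hobj B).symm) ∧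
    F ⋙ F' = 𝟭 T.Alg ∧ F' ⋙ F = 𝟭 S.Alg

/-! ### Construction of the completion of a semi-theory -/

namespace Compl

/-- Hom-sets of a semi-theory, with explicit instance. -/
abbrev H (S : SemiTheory) (a b : ℕ+) : Type :=
  @Quiver.Hom Ob S.cat.toCategoryStruct.toQuiver ⟨a⟩ ⟨b⟩

/-- Composition in a semi-theory, with explicit instance. -/
abbrev hcomp {S : SemiTheory} {a b c : ℕ+} (f : H S a b) (g : H S b c) : H S a c :=
  @CategoryStruct.comp Ob S.cat.toCategoryStruct ⟨a⟩ ⟨b⟩ ⟨c⟩ f g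

/-- Identity in a semi-theory, with explicit instance. -/
abbrev hid (S : SemiTheory) (a : ℕ+) : H S a a :=
  @CategoryStruct.id Ob S.cat.toCategoryStruct ⟨a⟩

theorem hid_comp {S : SemiTheory} {a b : ℕ+} (f : H S a b) : hcomp (hid S a) f = f :=
  @Category.id_comp Ob S.cat ⟨a⟩ ⟨b⟩ f

theorem comp_hid {S : SemiTheory} {a b : ℕ+} (f : H S a b) : hcomp f (hid S b) = f :=
  @Category.comp_id Ob S.cat ⟨a⟩ ⟨b⟩ f

theorem hcomp_assoc {S : SemiTheory} {a b c d : ℕ+} (f : H S a b) (g : H S b c)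
    (h : H S c d) : hcomp (hcomp f g) h = hcomp f (hcomp g h) :=
  @Category.assoc Ob S.cat _ _ _ _ f g h

theorem proj_one' (S : SemiTheory) (j : Fin (1 : ℕ+)) : S.proj 1 j = hid S 1 := by
  have hj0 : (j : ℕ) = 0 := by have := j.isLt; simpa using this
  have hj : j = ⟨0, Nat.one_pos⟩ := Fin.ext hj0
  rw [hj, S.proj_one]

/-- Raw terms: formal composites of morphisms `[n] ⟶ [1]` of `S` applied to
tuples of terms, over a context `[m]`. -/
inductive Tm (S : SemiTheory) : ℕ+ → Type
  | var {m : ℕ+} (k : Fin m) : Tm S m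
  | node {m n : ℕ+} (g : H S n 1) (t : Fin n → Tm S m) : Tm S m

/-- The congruence forcing projections to behave as projections and node
application to be compatible with composition in `S`. -/
inductive Rel (S : SemiTheory) : {m : ℕ+} → Tm S m → Tm S m → Prop
  | refl {m} (t : Tm S m) : Rel S t t
  | symm {m} {t u : Tm S m} : Rel S t u → Rel S u t
  | trans {m} {t u v : Tm S m} : Rel S t u → Rel S u v → Rel S t v
  | projR {m n : ℕ+} (k : Fin n) (t : Fin n → Tm S m) :
      Rel S (.node (S.proj n k) t) (t k)
  | compR {m n' n : ℕ+} (f : H S n' n) (g : H S n 1) (t : Fin n' → Tm S m) :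
      Rel S (.node (hcomp f g) t) (.node g fun j => .node (hcomp f (S.proj n j)) t)
  | nodeC {m n : ℕ+} (g : H S n 1) {t u : Fin n → Tm S m} :
      (∀ j, Rel S (t j) (u j)) → Rel S (.node g t) (.node g u)

instance tmSetoid (S : SemiTheory) (m : ℕ+) : Setoid (Tm S m) :=
  ⟨Rel S, ⟨Rel.refl, Rel.symm, Rel.trans⟩⟩

/-- Morphisms `[m] ⟶ [1]` of the completion: terms modulo the congruence. -/
abbrev Q (S : SemiTheory) (m : ℕ+) : Type := Quotient (tmSetoid S m)

/-- Substitution of a tuple of terms for the variables of a term. -/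
def subst {S : SemiTheory} {n m : ℕ+} : Tm S n → (Fin n → Tm S m) → Tm S m
  | .var k, σ => σ k
  | .node g t, σ => .node g fun j => subst (t j) σ

theorem subst_rel_left {S : SemiTheory} {n m : ℕ+} {a b : Tm S n} (h : Rel S a b)
    (σ : Fin n → Tm S m) : Rel S (subst a σ) (subst b σ) := by
  induction h with
  | refl t => exact .refl _
  | symm _ ih => exact .symm ih
  | trans _ _ ih1 ih2 => exact .trans ih1 ih2
  | projR k t => exact .projR k _
  | compR f g t => exact .compR f g _
  | nodeC g _ ih => exact .nodeC g ih

theorem subst_rel_right {S : SemiTheory} {n m : ℕ+} (a : Tm S n) {σ τ : Fin n → Tm S m}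
    (h : ∀ k, Rel S (σ k) (τ k)) : Rel S (subst a σ) (subst a τ) := by
  induction a with
  | var k => exact h k
  | node g t ih => exact .nodeC g fun j => ih j

theorem subst_var {S : SemiTheory} {m : ℕ+} (a : Tm S m) :
    subst a (fun k => .var k) = a := by
  induction a with
  | var k => rfl
  | node g t ih => simp only [subst]; exact congrArg _ (funext ih)

theorem subst_subst {S : SemiTheory} {a b c : ℕ+} (t : Tm S c) (σ : Fin c → Tm S b)
    (τ : Fin b → Tm S a) :
    subst (subst t σ) τ = subst t fun k => subst (σ k) τ := by
  induction t with
  | var k => rfl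
  | node g t ih => simp only [subst]; exact congrArg _ (funext ih)

/-- Substitution on the quotient. -/
def qsubst {S : SemiTheory} {n m : ℕ+} (a : Q S n) (σ : Fin n → Q S m) : Q S m :=
  Quotient.liftOn a (fun t => ⟦subst t fun k => (σ k).out⟧)
    fun _ _ h => Quotient.sound (subst_rel_left h _)

theorem qsubst_eq {S : SemiTheory} {n m : ℕ+} (a : Q S n) (σ : Fin n → Q S m) :
    qsubst a σ = ⟦subst a.out fun k => (σ k).out⟧ := by
  conv_lhs => rw [← Quotient.out_eq a]
  rfl

theorem qsubst_mk {S : SemiTheory} {n m : ℕ+} (t : Tm S n) (σq : Fin n → Q S m)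
    (σ : Fin n → Tm S m) (hσ : ∀ k, σq k = ⟦σ k⟧) :
    qsubst ⟦t⟧ σq = ⟦subst t σ⟧ := by
  refine Quotient.sound (subst_rel_right t fun k => ?_)
  exact Quotient.exact ((Quotient.out_eq (σq k)).trans (hσ k))

theorem qsubst_mk_mk {S : SemiTheory} {n m : ℕ+} (t : Tm S n) (σ : Fin n → Tm S m) :
    qsubst ⟦t⟧ (fun k => ⟦σ k⟧) = ⟦subst t σ⟧ :=
  qsubst_mk t _ σ fun _ => rfl

theorem qsubst_mk_out {S : SemiTheory} {n m : ℕ+} (t : Tm S n) (σq : Fin n → Q S m) :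
    qsubst ⟦t⟧ σq = ⟦subst t fun k => (σq k).out⟧ := rfl

/-! #### The completed category -/

/-- Hom-sets of the completion: tuples of terms modulo the congruence. -/
def LCHom (S : SemiTheory) (a b : Ob) : Type := Fin (b.val : ℕ) → Q S a.val

/-- The underlying category of the completion. -/
def LCcat (S : SemiTheory) : Category.{0, 0} Ob where
  Hom := LCHom S
  id a := fun k => ⟦.var k⟧
  comp {a b c} (F : LCHom S a b) (G : LCHom S b c) := fun j => qsubst (G j) F
  id_comp {a b} F := funext fun j => by
    show qsubst (F j) (fun k => ⟦.var k⟧) = F j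
    refine Quotient.inductionOn (F j) fun t => ?_
    rw [qsubst_mk_mk, subst_var]
  comp_id {a b} F := funext fun j => by
    show (⟦(F j).out⟧ : Q S a.val) = F j
    exact Quotient.out_eq _
  assoc {a b c d} (F : LCHom S a b) (G : LCHom S b c) (H : LCHom S c d) := funext fun j => by
    show qsubst (H j) (fun k => qsubst (G k) F) = qsubst (qsubst (H j) G) F
    refine Quotient.inductionOn (H j) fun h => ?_
    rw [qsubst_mk h _ (fun k => subst (G k).out fun i => (F i).out)
        (fun k => qsubst_eq (G k) F)]
    exact (congrArg (fun t => (⟦t⟧ : Q S a.val)) (subst_subst h _ _)).symm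

/-- The projections of the completion. -/
def LCproj (S : SemiTheory) (n : ℕ+) (k : Fin n) :
    @Quiver.Hom Ob (LCcat S).toCategoryStruct.toQuiver ⟨n⟩ ⟨1⟩ :=
  fun _ => ⟦.var k⟧

/-- The completion of a semi-theory, as a semi-theory. -/
def LC (S : SemiTheory) : SemiTheory where
  cat := LCcat S
  proj := LCproj S
  proj_one := funext fun i => by
    have h0 : (i : ℕ) = 0 := by have := i.isLt; simpa using this
    show (⟦Tm.var ⟨0, Nat.one_pos⟩⟧ : Q S 1) = ⟦Tm.var i⟧
    exact congrArg (fun z => (⟦Tm.var z⟧ : Q S 1)) (Fin.ext h0.symm)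

theorem LC_proj (S : SemiTheory) : (LC S).proj = LCproj S := rfl

theorem lc_comp_proj {S : SemiTheory} {m n : ℕ+} (F : H (LC S) m n) (k : Fin n) :
    hcomp F (LCproj S n k) = fun _ => F k := by
  funext j
  show qsubst ⟦Tm.var k⟧ F = F k
  exact Quotient.out_eq (F k)

theorem fin1_eq (n : ℕ+) (h : (n : ℕ) = 1) (i j : Fin n) : i = j := by
  apply Fin.ext
  have hi := i.isLt; have hj := j.isLt
  omega

theorem LC_isAlgebraic (S : SemiTheory) : (LC S).IsAlgebraic := by
  intro m n hn
  constructor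
  · intro F G h
    funext k
    have h2 : hcomp F (LCproj S n k) = hcomp G (LCproj S n k) := congrFun h k
    rw [lc_comp_proj, lc_comp_proj] at h2
    exact congrFun h2 ⟨0, Nat.one_pos⟩
  · intro h
    refine ⟨fun k => h k ⟨0, Nat.one_pos⟩, funext fun k => ?_⟩
    show hcomp (fun i => h i ⟨0, Nat.one_pos⟩) (LCproj S n k) = h k
    refine (lc_comp_proj _ k).trans ?_
    funext j
    exact congrArg (h k) (fin1_eq 1 rfl _ j)

/-! #### The unit -/

/-- The unit functor `C ⟶ LC` on morphisms. -/
def etaMap {S : SemiTheory} {a b : ℕ+} (f : H S a b) : LCHom S ⟨a⟩ ⟨b⟩ :=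
  fun k => ⟦.node (hcomp f (S.proj b k)) fun i => .var i⟧

theorem etaMap_id (S : SemiTheory) (a : ℕ+) : etaMap (hid S a) = fun k => ⟦.var k⟧ := by
  funext k
  refine Quotient.sound ?_
  rw [hid_comp]
  exact Rel.projR k _

theorem etaMap_comp {S : SemiTheory} {a b c : ℕ+} (f : H S a b) (g : H S b c) :
    etaMap (hcomp f g) = fun j => qsubst (etaMap g j) (etaMap f) := by
  funext k
  rw [show etaMap g k = ⟦.node (hcomp g (S.proj c k)) fun i => .var i⟧ from rfl,
    qsubst_mk _ (etaMap f) (fun j => .node (hcomp f (S.proj b j)) fun i => .var i)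
      fun j => rfl]
  refine Quotient.sound ?_
  show Rel S (.node (hcomp (hcomp f g) (S.proj c k)) fun i => .var i)
    (.node (hcomp g (S.proj c k)) fun j => subst (Tm.var j)
      fun i => Tm.node (hcomp f (S.proj b i)) fun i' => Tm.var i')
  rw [hcomp_assoc]
  exact Rel.compR f (hcomp g (S.proj c k)) _

/-- The unit of the completion, as a functor. -/
def etaFunc (S : SemiTheory) : @CategoryTheory.Functor Ob S.cat Ob (LC S).cat :=
  @CategoryTheory.Functor.mk Ob S.cat Ob (LC S).cat
    (fun n => n) (fun {a b} f => etaMap f)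
    (fun a => etaMap_id S a.val)
    (fun {a b c} f g => etaMap_comp f g)

theorem eta_proj_eq (S : SemiTheory) (n : ℕ+) (k : Fin n) :
    etaMap (S.proj n k) = LCproj S n k := by
  funext j
  refine Quotient.sound ?_
  rw [proj_one' S j, comp_hid]
  exact Rel.projR k _

/-- The unit of the completion, as a morphism of semi-theories. -/
def eta (S : SemiTheory) : STHom S (LC S) where
  func := etaFunc S
  obj_eq n := rfl
  proj_eq n k := by
    letI := (LC S).cat
    show etaMap (S.proj n k) = eqToHom rfl ≫ LCproj S n k ≫ eqToHom rfl
    rw [eqToHom_refl, eqToHom_refl]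
    exact (eta_proj_eq S n k).trans ((@Category.comp_id Ob (LC S).cat _ _ (LCproj S n k)).symm.trans
      (@Category.id_comp Ob (LC S).cat _ _ _).symm)

/-! #### Evaluation in an algebraic theory -/

/-- `eqToHom` with an explicit category instance. -/
abbrev heqHom (T : SemiTheory) {x y : Ob} (h : x = y) :
    @Quiver.Hom Ob T.cat.toCategoryStruct.toQuiver x y :=
  @eqToHom Ob T.cat.toCategoryStruct x y h

/-- Tupling in an algebraic theory: the inverse of composing with the projections. -/
def tup (T : SemiTheory) (hT : T.IsAlgebraic) {m n : ℕ+} (u : Fin n → H T m 1) :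
    H T m n :=
  if h : 1 < (n : ℕ) then (Equiv.ofBijective _ (hT m n h)).symm u
  else hcomp (u ⟨0, n.pos⟩) (heqHom T (congrArg Ob.mk (PNat.coe_injective (by
    have h1 : (n : ℕ) ≤ 1 := not_lt.1 h
    have h2 : 0 < (n : ℕ) := n.pos
    have : (n : ℕ) = 1 := by omega
    rw [PNat.one_coe, this]))))

theorem tup_spec (T : SemiTheory) (hT : T.IsAlgebraic) {m n : ℕ+}
    (u : Fin n → H T m 1) (k : Fin n) :
    hcomp (tup T hT u) (T.proj n k) = u k := by
  by_cases h : 1 < (n : ℕ)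
  · rw [tup, dif_pos h]
    exact congrFun ((Equiv.ofBijective _ (hT m n h)).apply_symm_apply u) k
  · have hn : n = 1 := PNat.coe_injective (by
      have h1 : (n : ℕ) ≤ 1 := not_lt.1 h
      have h2 : 0 < (n : ℕ) := n.pos
      rw [PNat.one_coe]; omega)
    subst hn
    rw [tup, dif_neg h, proj_one' T k, comp_hid]
    rw [show heqHom T _ = hid T 1 from @eqToHom_refl Ob T.cat.toCategoryStruct ⟨1⟩ _, comp_hid]
    exact congrArg u (fin1_eq 1 rfl _ k)

theorem tup_unique (T : SemiTheory) (hT : T.IsAlgebraic) {m n : ℕ+} (f : H T m n) :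
    tup T hT (fun k => hcomp f (T.proj n k)) = f := by
  by_cases h : 1 < (n : ℕ)
  · rw [tup, dif_pos h]
    exact (Equiv.ofBijective _ (hT m n h)).symm_apply_apply f
  · have hn : n = 1 := PNat.coe_injective (by
      have h1 : (n : ℕ) ≤ 1 := not_lt.1 h
      have h2 : 0 < (n : ℕ) := n.pos
      rw [PNat.one_coe]; omega)
    subst hn
    rw [tup, dif_neg h]
    rw [show heqHom T _ = hid T 1 from @eqToHom_refl Ob T.cat.toCategoryStruct ⟨1⟩ _, comp_hid,
      proj_one' T _, comp_hid]

theorem tup_comp (T : SemiTheory) (hT : T.IsAlgebraic) {a m n : ℕ+}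
    (h : H T a m) (w : Fin n → H T m 1) :
    tup T hT (fun k => hcomp h (w k)) = hcomp h (tup T hT w) := by
  have hw : (fun k => hcomp h (w k))
      = fun k => hcomp (hcomp h (tup T hT w)) (T.proj n k) :=
    funext fun k => by rw [hcomp_assoc, tup_spec]
  rw [hw, tup_unique]

theorem tup_proj (T : SemiTheory) (hT : T.IsAlgebraic) (m : ℕ+) :
    tup T hT (fun k => T.proj m k) = hid T m := by
  have : (fun k => T.proj m k) = fun k => hcomp (hid T m) (T.proj m k) :=
    funext fun k => (hid_comp _).symm
  rw [this, tup_unique]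

/-- The action of a morphism of semi-theories on hom-sets, normalized by the
object identifications. -/
def mapHom {S T : SemiTheory} (φ : STHom S T) {a b : ℕ+} (f : H S a b) : H T a b :=
  letI := T.cat
  eqToHom (φ.obj_eq ⟨a⟩).symm ≫ fmap φ.func f ≫ eqToHom (φ.obj_eq ⟨b⟩)

theorem mapHom_proj {S T : SemiTheory} (φ : STHom S T) (n : ℕ+) (k : Fin n) :
    mapHom φ (S.proj n k) = T.proj n k := by
  letI := T.cat
  show eqToHom (φ.obj_eq ⟨n⟩).symm ≫ fmap φ.func (S.proj n k) ≫ eqToHom (φ.obj_eq ⟨1⟩)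
    = T.proj n k
  rw [φ.proj_eq n k]
  simp

theorem mapHom_comp {S T : SemiTheory} (φ : STHom S T) {a b c : ℕ+}
    (f : H S a b) (g : H S b c) :
    mapHom φ (hcomp f g) = hcomp (mapHom φ f) (mapHom φ g) := by
  letI := T.cat
  show eqToHom (φ.obj_eq ⟨a⟩).symm ≫ fmap φ.func (hcomp f g) ≫ eqToHom (φ.obj_eq ⟨c⟩)
    = (eqToHom (φ.obj_eq ⟨a⟩).symm ≫ fmap φ.func f ≫ eqToHom (φ.obj_eq ⟨b⟩))
      ≫ (eqToHom (φ.obj_eq ⟨b⟩).symm ≫ fmap φ.func g ≫ eqToHom (φ.obj_eq ⟨c⟩))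
  rw [fmap_comp]
  simp [eqToHom_trans_assoc]

/-- Composition between arbitrary objects, with explicit instance. -/
abbrev gcomp (T : SemiTheory) {x y z : Ob}
    (f : @Quiver.Hom Ob T.cat.toCategoryStruct.toQuiver x y)
    (g : @Quiver.Hom Ob T.cat.toCategoryStruct.toQuiver y z) :
    @Quiver.Hom Ob T.cat.toCategoryStruct.toQuiver x z :=
  @CategoryStruct.comp Ob T.cat.toCategoryStruct x y z f g

/-- Composition of morphisms of semi-theories, with explicit instance. -/
def stcomp {S T U : SemiTheory} (f : STHom S T) (g : STHom T U) : STHom S U :=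
  @CategoryStruct.comp SemiTheory _ S T U f g

theorem mapHom_st_comp {S T U : SemiTheory} (f : STHom S T) (g : STHom T U) {a b : ℕ+}
    (x : H S a b) : mapHom (stcomp f g) x = mapHom g (mapHom f x) := by
  show gcomp U (heqHom U ((stcomp f g).obj_eq ⟨a⟩).symm)
      (gcomp U (fmap g.func (fmap f.func x)) (heqHom U ((stcomp f g).obj_eq ⟨b⟩)))
    = gcomp U (heqHom U (g.obj_eq ⟨a⟩).symm)
      (gcomp U (fmap g.func (gcomp T (heqHom T (f.obj_eq ⟨a⟩).symm)
          (gcomp T (fmap f.func x) (heqHom T (f.obj_eq ⟨b⟩)))))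
        (heqHom U (g.obj_eq ⟨b⟩)))
  rw [fmap_comp, fmap_comp, fmap_eqToHom, fmap_eqToHom]
  letI := U.cat
  simp [eqToHom_trans, eqToHom_trans_assoc]
  rfl

theorem mapHom_eta {S : SemiTheory} {a b : ℕ+} (x : H S a b) :
    mapHom (eta S) x = etaMap x := by
  letI := (LC S).cat
  show eqToHom ((eta S).obj_eq ⟨a⟩).symm ≫ fmap (eta S).func x
      ≫ eqToHom ((eta S).obj_eq ⟨b⟩) = etaMap x
  exact (@Category.id_comp Ob (LC S).cat _ _ _).trans (@Category.comp_id Ob (LC S).cat _ _ _)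

/-- Evaluation of a term in an algebraic theory, along a morphism of
semi-theories. -/
def ev {S T : SemiTheory} (hT : T.IsAlgebraic) (φ : STHom S T) {m : ℕ+} :
    Tm S m → H T m 1
  | .var k => T.proj m k
  | .node g t => hcomp (tup T hT fun j => ev hT φ (t j)) (mapHom φ g)

theorem ev_rel {S T : SemiTheory} (hT : T.IsAlgebraic) (φ : STHom S T) {m : ℕ+}
    {a b : Tm S m} (h : Rel S a b) : ev hT φ a = ev hT φ b := by
  induction h with
  | refl t => rfl
  | symm _ ih => exact ih.symm
  | trans _ _ ih1 ih2 => exact ih1.trans ih2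
  | projR k t =>
    show hcomp (tup T hT fun j => ev hT φ (t j)) (mapHom φ (S.proj _ k)) = ev hT φ (t k)
    rw [mapHom_proj, tup_spec]
  | compR f g t =>
    show hcomp (tup T hT fun j => ev hT φ (t j)) (mapHom φ (hcomp f g))
      = hcomp (tup T hT fun j => hcomp (tup T hT fun i => ev hT φ (t i))
          (mapHom φ (hcomp f (S.proj _ j)))) (mapHom φ g)
    rw [mapHom_comp]
    have hr : (fun j => hcomp (tup T hT fun i => ev hT φ (t i))
          (mapHom φ (hcomp f (S.proj _ j))))
        = fun j => hcomp (hcomp (tup T hT fun i => ev hT φ (t i)) (mapHom φ f))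
            (T.proj _ j) :=
      funext fun j => by rw [mapHom_comp, mapHom_proj, hcomp_assoc]
    rw [hr, tup_unique, ← hcomp_assoc]
  | nodeC g _ ih =>
    exact congrArg (fun u => hcomp (tup T hT u) (mapHom φ g)) (funext ih)

/-- Evaluation on the quotient. -/
def evQ {S T : SemiTheory} (hT : T.IsAlgebraic) (φ : STHom S T) {m : ℕ+} :
    Q S m → H T m 1 :=
  Quotient.lift (ev hT φ) fun _ _ h => ev_rel hT φ h

theorem evQ_out {S T : SemiTheory} (hT : T.IsAlgebraic) (φ : STHom S T) {m : ℕ+}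
    (q : Q S m) : ev hT φ q.out = evQ hT φ q := by
  conv_rhs => rw [← Quotient.out_eq q]
  rfl

theorem ev_subst {S T : SemiTheory} (hT : T.IsAlgebraic) (φ : STHom S T)
    {n m : ℕ+} (a : Tm S n) (σ : Fin n → Tm S m) :
    ev hT φ (subst a σ) = hcomp (tup T hT fun k => ev hT φ (σ k)) (ev hT φ a) := by
  induction a with
  | var k =>
    show ev hT φ (σ k) = hcomp (tup T hT fun i => ev hT φ (σ i)) (T.proj n k)
    rw [tup_spec]
  | node g t ih =>
    show hcomp (tup T hT fun j => ev hT φ (subst (t j) σ)) (mapHom φ g) = _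
    rw [show (fun j => ev hT φ (subst (t j) σ))
        = fun j => hcomp (tup T hT fun k => ev hT φ (σ k)) (ev hT φ (t j)) from
        funext ih,
      tup_comp, hcomp_assoc]
    rfl

/-! #### The extension of a morphism into an algebraic theory -/

theorem evQ_qsubst {S T : SemiTheory} (hT : T.IsAlgebraic) (φ : STHom S T)
    {a b : ℕ+} (F : Fin b → Q S a) (q : Q S b) :
    evQ hT φ (qsubst q F) = hcomp (tup T hT fun i => evQ hT φ (F i)) (evQ hT φ q) := by
  conv_lhs => rw [← Quotient.out_eq q, qsubst_mk_out]
  show ev hT φ (subst q.out fun i => (F i).out) = _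
  rw [ev_subst, show (fun i => ev hT φ (F i).out) = fun i => evQ hT φ (F i) from
    funext fun i => evQ_out hT φ (F i), evQ_out]

/-- The extension of `φ : S ⟶ T` to the completion, as a functor. -/
def extendFunc {S T : SemiTheory} (hT : T.IsAlgebraic) (φ : STHom S T) :
    @CategoryTheory.Functor Ob (LC S).cat Ob T.cat :=
  @CategoryTheory.Functor.mk Ob (LC S).cat Ob T.cat
    (fun n => n)
      (fun {a b} F => tup T hT fun k => evQ hT φ (F k))
    (fun a => by
      show tup T hT (fun k => T.proj a.val k) = hid T a.val
      exact tup_proj T hT a.val)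
    (fun {a b c} F G => by
      show tup T hT (fun k => evQ hT φ (qsubst (G k) F)) = _
      rw [show (fun k => evQ hT φ (qsubst (G k) F))
          = fun k => hcomp (tup T hT fun i => evQ hT φ (F i)) (evQ hT φ (G k)) from
          funext fun k => evQ_qsubst hT φ F (G k),
        tup_comp])

/-- The extension of `φ : S ⟶ T` to the completion, as a morphism of
semi-theories. -/
def extendHom {S T : SemiTheory} (hT : T.IsAlgebraic) (φ : STHom S T) :
    STHom (LC S) T where
  func := extendFunc hT φ
  obj_eq n := rfl
  proj_eq n k := by
    letI := T.cat
    show tup T hT (fun j => evQ hT φ (LCproj S n k j)) =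
      eqToHom rfl ≫ T.proj n k ≫ eqToHom rfl
    rw [eqToHom_refl, eqToHom_refl, Category.comp_id, Category.id_comp]
    rw [tup, dif_neg (by simp)]
    rw [show heqHom T _ = hid T 1 from @eqToHom_refl Ob T.cat.toCategoryStruct ⟨1⟩ _, comp_hid]
    rfl

/-- A single morphism `[m] ⟶ [1]` of the completion. -/
def sing {S : SemiTheory} {m : ℕ+} (q : Q S m) : H (LC S) m 1 := fun _ => q

theorem comp_sing {S : SemiTheory} {m n : ℕ+} (F : H (LC S) m n) (k : Fin n) :
    hcomp F (LCproj S n k) = sing (F k) :=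
  lc_comp_proj F k

theorem mapHom_sing_tup {S T : SemiTheory} (hT : T.IsAlgebraic)
    (Ψ : STHom (LC S) T) {m n : ℕ+} (F : H (LC S) m n) :
    tup T hT (fun j => mapHom Ψ (sing (F j))) = mapHom Ψ F := by
  have hr : (fun j => mapHom Ψ (sing (F j)))
      = fun j => hcomp (mapHom Ψ F) (T.proj n j) := funext fun j => by
    rw [← comp_sing F j, show LCproj S n j = (LC S).proj n j from rfl, mapHom_comp,
      mapHom_proj]
  rw [hr, tup_unique]

theorem sing_node {S : SemiTheory} {m n : ℕ+} (g : H S n 1) (t : Fin n → Tm S m) :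
    hcomp (fun j => (⟦t j⟧ : Q S m)) (etaMap g) = sing ⟦Tm.node g t⟧ := by
  funext j
  show qsubst ⟦Tm.node (hcomp g (S.proj 1 j)) fun i => Tm.var i⟧ (fun i => ⟦t i⟧)
    = ⟦Tm.node g t⟧
  rw [qsubst_mk_mk]
  refine Quotient.sound ?_
  show Rel S (.node (hcomp g (S.proj 1 j)) fun i => subst (.var i) fun i' => t i')
    (.node g t)
  rw [proj_one' S j, comp_hid]
  exact Rel.refl _

theorem ev_psi {S T : SemiTheory} (hT : T.IsAlgebraic) (Ψ : STHom (LC S) T)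
    {m : ℕ+} (t : Tm S m) :
    ev hT (stcomp (eta S) Ψ) t = mapHom Ψ (sing ⟦t⟧) := by
  induction t with
  | var k => exact (mapHom_proj Ψ m k).symm
  | node g t ih =>
    show hcomp (tup T hT fun j => ev hT (stcomp (eta S) Ψ) (t j)) (mapHom (stcomp (eta S) Ψ) g) = _
    rw [show (fun j => ev hT (stcomp (eta S) Ψ) (t j))
        = fun j => mapHom Ψ (sing ⟦t j⟧) from funext ih]
    rw [mapHom_sing_tup hT Ψ (fun j => (⟦t j⟧ : Q S m)), mapHom_st_comp, mapHom_eta]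
    exact (mapHom_comp Ψ _ _).symm.trans (congrArg (mapHom Ψ) (sing_node g t))

theorem evQ_psi {S T : SemiTheory} (hT : T.IsAlgebraic) (Ψ : STHom (LC S) T)
    {m : ℕ+} (q : Q S m) :
    evQ hT (stcomp (eta S) Ψ) q = mapHom Ψ (sing q) := by
  conv_lhs => rw [← Quotient.out_eq q]
  conv_rhs => rw [← Quotient.out_eq q]
  exact ev_psi hT Ψ q.out

theorem extend_eta {S T : SemiTheory} (hT : T.IsAlgebraic) (Ψ : STHom (LC S) T) :
    extendHom hT (stcomp (eta S) Ψ) = Ψ := by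
  apply STHom.ext'
  refine @CategoryTheory.Functor.ext Ob (LC S).cat Ob T.cat _ _
    (fun n => (Ψ.obj_eq n).symm) ?_
  intro a b F
  show tup T hT (fun k => evQ hT (stcomp (eta S) Ψ) (F k)) = _
  rw [show (fun k => evQ hT (stcomp (eta S) Ψ) (F k)) = fun k => mapHom Ψ (sing (F k)) from
    funext fun k => evQ_psi hT Ψ (F k), mapHom_sing_tup]
  rfl

theorem eta_extend {S T : SemiTheory} (hT : T.IsAlgebraic) (φ : STHom S T) :
    stcomp (eta S) (extendHom hT φ) = φ := by
  apply STHom.ext'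
  refine @CategoryTheory.Functor.ext Ob S.cat Ob T.cat _ _
    (fun n => (φ.obj_eq n).symm) ?_
  intro a b f
  show tup T hT (fun k => evQ hT φ (etaMap f k)) = _
  have hr : (fun k => evQ hT φ (etaMap f k))
      = fun k => hcomp (mapHom φ f) (T.proj b.val k) := funext fun k => by
    show ev hT φ (.node (hcomp f (S.proj b.val k)) fun i => .var i) = _
    show hcomp (tup T hT fun i => T.proj a.val i) (mapHom φ (hcomp f (S.proj b.val k)))
      = _
    rw [tup_proj, hid_comp, mapHom_comp, mapHom_proj]
  rw [hr, tup_unique]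
  rfl

/-! #### The adjunction -/

/-- The completion, as an object of the category of algebraic theories. -/
def LObj (S : SemiTheory) : ObjectProperty.FullSubcategory SemiTheory.IsAlgebraic :=
  ⟨LC S, LC_isAlgebraic S⟩

/-- The hom-set bijection of the completion adjunction. -/
def homEq (X : SemiTheory) (Y : ObjectProperty.FullSubcategory SemiTheory.IsAlgebraic) :
    (LObj X ⟶ Y) ≃ (X ⟶ (ObjectProperty.ι SemiTheory.IsAlgebraic).obj Y) where
  toFun Ψ := stcomp (eta X) Ψ.hom
  invFun φ := ObjectProperty.homMk (extendHom Y.property φ)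
  left_inv Ψ := InducedCategory.Hom.ext (extend_eta Y.property Ψ.hom)
  right_inv φ := eta_extend Y.property φ

theorem homEq_nat (X : SemiTheory) (Y Y' : ObjectProperty.FullSubcategory SemiTheory.IsAlgebraic)
    (g : Y ⟶ Y') (h : LObj X ⟶ Y) :
    homEq X Y' (h ≫ g)
      = homEq X Y h ≫ (ObjectProperty.ι SemiTheory.IsAlgebraic).map g :=
  (@Category.assoc SemiTheory _ X (LC X) Y.obj Y'.obj (eta X) h.hom g.hom).symm

/-! #### Simplicial tools for strict algebras -/

/-! #### Simplicial tools for strict algebras -/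

/-- Objects of a diagram, indexed by positive integers. -/
abbrev Xobj {S : SemiTheory} (X : S.Diag) (m : ℕ+) : SSet :=
  @Prefunctor.obj Ob S.cat.toCategoryStruct.toQuiver SSet _
    (@CategoryTheory.Functor.toPrefunctor Ob S.cat SSet _ X) ⟨m⟩

/-- Morphism action of a diagram. -/
abbrev Xmap {S : SemiTheory} (X : S.Diag) {a b : ℕ+} (f : H S a b) :
    Xobj X a ⟶ Xobj X b :=
  @Prefunctor.map Ob S.cat.toCategoryStruct.toQuiver SSet _
    (@CategoryTheory.Functor.toPrefunctor Ob S.cat SSet _ X) ⟨a⟩ ⟨b⟩ f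

theorem Xmap_id {S : SemiTheory} (X : S.Diag) (a : ℕ+) :
    Xmap X (hid S a) = 𝟙 (Xobj X a) :=
  @CategoryTheory.Functor.map_id Ob S.cat SSet _ X ⟨a⟩

theorem Xmap_comp {S : SemiTheory} (X : S.Diag) {a b c : ℕ+} (f : H S a b)
    (g : H S b c) : Xmap X (hcomp f g) = Xmap X f ≫ Xmap X g :=
  @CategoryTheory.Functor.map_comp Ob S.cat SSet _ X ⟨a⟩ ⟨b⟩ ⟨c⟩ f g

/-- Tupling of maps into a levelwise power. -/
def tupFan {n : ℕ+} {A B : SSet} (u : Fin n → (A ⟶ B)) : A ⟶ finPow n B where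
  app m := ↾(fun a k => (u k).app m a)
  naturality m m' θ := by
    refine TypeCat.homEquiv.injective (funext fun a => ?_)
    funext k
    exact FunctorToTypes.naturality (u k) θ a

/-- Projection from a levelwise power. -/
def piK (n : ℕ+) (B : SSet) (k : Fin n) : finPow n B ⟶ B where
  app m := ↾(fun f => f k)
  naturality m m' θ := rfl

/-- Functoriality of levelwise powers. -/
def finPowMap (n : ℕ+) {A B : SSet} (v : A ⟶ B) : finPow n A ⟶ finPow n B where
  app m := ↾(fun f k => v.app m (f k))
  naturality m m' θ := by
    refine TypeCat.homEquiv.injective (funext fun f => ?_)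
    funext k
    exact FunctorToTypes.naturality v θ (f k)

theorem tupFan_pi {n : ℕ+} {A B : SSet} (u : Fin n → (A ⟶ B)) (k : Fin n) :
    tupFan u ≫ piK n B k = u k := rfl

theorem tupFan_comp_left {n : ℕ+} {C A B : SSet} (h : C ⟶ A) (u : Fin n → (A ⟶ B)) :
    tupFan (fun k => h ≫ u k) = h ≫ tupFan u := rfl

theorem tupFan_finPowMap {n : ℕ+} {A B B' : SSet} (u : Fin n → (A ⟶ B)) (v : B ⟶ B') :
    tupFan u ≫ finPowMap n v = tupFan fun k => u k ≫ v := rfl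

/-- The comparison fan, with its type in normal form. -/
def pf (S : SemiTheory) (X : S.Diag) (n : ℕ+) : Xobj X n ⟶ finPow n (Xobj X 1) :=
  S.projFan X n

theorem projFan_eq_tupFan {S : SemiTheory} (X : S.Diag) (n : ℕ+) :
    pf S X n = tupFan fun k => Xmap X (S.proj n k) := rfl

theorem tupFan_projFan {S : SemiTheory} (X : S.Diag) (n : ℕ+) {C : SSet}
    (B : C ⟶ Xobj X n) :
    tupFan (fun j => B ≫ Xmap X (S.proj n j)) = B ≫ pf S X n := rfl

/-- The inverse of the comparison fan in degree one. -/
def fanOneInv {S : SemiTheory} (X : S.Diag) : finPow 1 (Xobj X 1) ⟶ Xobj X 1 where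
  app m := ↾(fun f => f ⟨0, Nat.one_pos⟩)
  naturality m m' θ := rfl

theorem fanOne_isIso {S : SemiTheory} (X : S.Diag) : IsIso (pf S X 1) := by
  refine ⟨fanOneInv X, ?_, ?_⟩
  · apply NatTrans.ext; funext m
    refine TypeCat.homEquiv.injective (funext fun a => ?_)
    show (Xmap X (S.proj 1 ⟨0, Nat.one_pos⟩)).app m a = a
    rw [show S.proj 1 ⟨0, Nat.one_pos⟩ = hid S 1 from proj_one' S _, Xmap_id]
    rfl
  · apply NatTrans.ext; funext m
    refine TypeCat.homEquiv.injective (funext fun f => ?_)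
    show (fun k => (Xmap X (S.proj 1 k)).app m (f ⟨0, Nat.one_pos⟩)) = f
    funext k
    rw [proj_one' S k, Xmap_id]
    exact congrArg f (fin1_eq 1 rfl _ k)

theorem fan_isIso {S : SemiTheory} (X : S.Diag) (hX : S.IsStrictAlgebra X) (n : ℕ+) :
    IsIso (pf S X n) := by
  by_cases h : 1 < (n : ℕ)
  · exact hX n h
  · have hn : n = 1 := PNat.coe_injective (by
      have h1 : (n : ℕ) ≤ 1 := not_lt.1 h
      have h2 : 0 < (n : ℕ) := n.pos
      rw [PNat.one_coe]; omega)
    subst hn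
    exact fanOne_isIso X

/-- The inverse of the comparison fan of a strict algebra. -/
def xinv {S : SemiTheory} (X : S.Diag) (hX : S.IsStrictAlgebra X) (n : ℕ+) :
    finPow n (Xobj X 1) ⟶ Xobj X n :=
  letI := fan_isIso X hX n
  inv (pf S X n)

theorem fan_hom_inv {S : SemiTheory} (X : S.Diag) (hX : S.IsStrictAlgebra X) (n : ℕ+) :
    pf S X n ≫ xinv X hX n = 𝟙 (Xobj X n) := by
  haveI := fan_isIso X hX n
  show pf S X n ≫ inv (pf S X n) = 𝟙 (Xobj X n)
  simp

theorem xinv_hom {S : SemiTheory} (X : S.Diag) (hX : S.IsStrictAlgebra X) (n : ℕ+) :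
    xinv X hX n ≫ pf S X n = 𝟙 (finPow n (Xobj X 1)) := by
  haveI := fan_isIso X hX n
  show inv (pf S X n) ≫ pf S X n = 𝟙 _
  simp

theorem fan_xinv {S : SemiTheory} (X : S.Diag) (hX : S.IsStrictAlgebra X) (n : ℕ+)
    {C : SSet} (B : C ⟶ Xobj X n) :
    (B ≫ pf S X n) ≫ xinv X hX n = B := by
  rw [Category.assoc, fan_hom_inv, Category.comp_id]

theorem xinv_proj {S : SemiTheory} (X : S.Diag) (hX : S.IsStrictAlgebra X) (n : ℕ+)
    (k : Fin n) :
    xinv X hX n ≫ Xmap X (S.proj n k) = piK n (Xobj X 1) k := by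
  haveI := fan_isIso X hX n
  show inv (pf S X n) ≫ Xmap X (S.proj n k) = piK n (Xobj X 1) k
  rw [IsIso.inv_comp_eq]
  rfl

/-- Components of a morphism of diagrams. -/
abbrev napp {S : SemiTheory} {X Y : S.Diag} (φ : X ⟶ Y) (m : ℕ+) :
    Xobj X m ⟶ Xobj Y m :=
  @NatTrans.app Ob S.cat SSet _ X Y φ ⟨m⟩

theorem fan_nat {S : SemiTheory} {X Y : S.Diag} (φ : X ⟶ Y) (n : ℕ+) :
    pf S X n ≫ finPowMap n (napp φ 1) = napp φ n ≫ pf S Y n := by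
  apply NatTrans.ext; funext m
  refine TypeCat.homEquiv.injective (funext fun a => ?_)
  funext k
  exact @natApply Ob S.cat X Y φ ⟨n⟩ ⟨1⟩ (S.proj n k) m a

theorem xinv_nat {S : SemiTheory} {X Y : S.Diag} (hX : S.IsStrictAlgebra X)
    (hY : S.IsStrictAlgebra Y) (φ : X ⟶ Y) (n : ℕ+) :
    xinv X hX n ≫ napp φ n = finPowMap n (napp φ 1) ≫ xinv Y hY n := by
  haveI := fan_isIso X hX n
  haveI := fan_isIso Y hY n
  show inv (pf S X n) ≫ napp φ n
    = finPowMap n (napp φ 1) ≫ inv (pf S Y n)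
  rw [IsIso.inv_comp_eq, ← Category.assoc, fan_nat, Category.assoc,
    IsIso.hom_inv_id, Category.comp_id]

theorem fan_xinv_assoc {S : SemiTheory} (X : S.Diag) (hX : S.IsStrictAlgebra X)
    (n : ℕ+) {C D : SSet} (B : C ⟶ Xobj X n) (w : Xobj X n ⟶ D) :
    (B ≫ pf S X n) ≫ xinv X hX n ≫ w = B ≫ w := by
  rw [← Category.assoc, fan_xinv]

/-- Interpretation of a term in a strict algebra. -/
def interp {S : SemiTheory} (X : S.Diag) (hX : S.IsStrictAlgebra X) {m : ℕ+} :
    Tm S m → (Xobj X m ⟶ Xobj X 1)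
  | .var k => Xmap X (S.proj m k)
  | .node g t => tupFan (fun j => interp X hX (t j)) ≫ xinv X hX _ ≫ Xmap X g

theorem interp_rel {S : SemiTheory} (X : S.Diag) (hX : S.IsStrictAlgebra X) {m : ℕ+}
    {a b : Tm S m} (h : Rel S a b) : interp X hX a = interp X hX b := by
  induction h with
  | refl t => rfl
  | symm _ ih => exact ih.symm
  | trans _ _ ih1 ih2 => exact ih1.trans ih2
  | projR k t =>
    show tupFan (fun j => interp X hX (t j)) ≫ xinv X hX _ ≫ Xmap X (S.proj _ k)
      = interp X hX (t k)
    rw [xinv_proj, tupFan_pi]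
  | compR f g t =>
    show tupFan (fun j => interp X hX (t j)) ≫ xinv X hX _ ≫ Xmap X (hcomp f g)
      = tupFan (fun j => tupFan (fun i => interp X hX (t i)) ≫ xinv X hX _
          ≫ Xmap X (hcomp f (S.proj _ j))) ≫ xinv X hX _ ≫ Xmap X g
    have h1 : (fun j => tupFan (fun i => interp X hX (t i)) ≫ xinv X hX _
          ≫ Xmap X (hcomp f (S.proj _ j)))
        = fun j => (tupFan (fun i => interp X hX (t i)) ≫ xinv X hX _ ≫ Xmap X f)
            ≫ Xmap X (S.proj _ j) := by
      funext j
      rw [Xmap_comp]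
      simp only [Category.assoc]
    rw [h1, tupFan_projFan, Xmap_comp, fan_xinv_assoc]
    simp only [Category.assoc]
  | nodeC g _ ih =>
    exact congrArg (fun u => tupFan u ≫ xinv X hX _ ≫ Xmap X g) (funext ih)

/-- Interpretation on the quotient. -/
def interpQ {S : SemiTheory} (X : S.Diag) (hX : S.IsStrictAlgebra X) {m : ℕ+} :
    Q S m → (Xobj X m ⟶ Xobj X 1) :=
  Quotient.lift (interp X hX) fun _ _ h => interp_rel X hX h

theorem interpQ_out {S : SemiTheory} (X : S.Diag) (hX : S.IsStrictAlgebra X) {m : ℕ+}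
    (q : Q S m) : interp X hX q.out = interpQ X hX q := by
  conv_rhs => rw [← Quotient.out_eq q]
  rfl

theorem interp_subst {S : SemiTheory} (X : S.Diag) (hX : S.IsStrictAlgebra X)
    {n m : ℕ+} (a : Tm S n) (σ : Fin n → Tm S m) :
    interp X hX (subst a σ)
      = (tupFan (fun k => interp X hX (σ k)) ≫ xinv X hX n) ≫ interp X hX a := by
  induction a with
  | var k =>
    show interp X hX (σ k)
      = (tupFan (fun i => interp X hX (σ i)) ≫ xinv X hX n) ≫ Xmap X (S.proj n k)
    rw [Category.assoc, xinv_proj, tupFan_pi]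
  | node g t ih =>
    show tupFan (fun j => interp X hX (subst (t j) σ)) ≫ xinv X hX _ ≫ Xmap X g = _
    rw [show (fun j => interp X hX (subst (t j) σ))
        = fun j => (tupFan (fun k => interp X hX (σ k)) ≫ xinv X hX n)
            ≫ interp X hX (t j) from funext ih,
      tupFan_comp_left]
    simp only [Category.assoc]
    rfl

theorem interpQ_qsubst {S : SemiTheory} (X : S.Diag) (hX : S.IsStrictAlgebra X)
    {a b : ℕ+} (F : Fin b → Q S a) (q : Q S b) :
    interpQ X hX (qsubst q F)
      = (tupFan (fun i => interpQ X hX (F i)) ≫ xinv X hX b) ≫ interpQ X hX q := by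
  conv_lhs => rw [← Quotient.out_eq q, qsubst_mk_out]
  show interp X hX (subst q.out fun i => (F i).out) = _
  rw [interp_subst, show (fun i => interp X hX (F i).out)
    = fun i => interpQ X hX (F i) from funext fun i => interpQ_out X hX (F i),
    interpQ_out]

theorem interp_nat {S : SemiTheory} {X Y : S.Diag} (hX : S.IsStrictAlgebra X)
    (hY : S.IsStrictAlgebra Y) (φ : X ⟶ Y) {m : ℕ+} (t : Tm S m) :
    interp X hX t ≫ napp φ 1 = napp φ m ≫ interp Y hY t := by
  induction t with
  | var k => exact @NatTrans.naturality Ob S.cat SSet _ X Y φ ⟨m⟩ ⟨1⟩ (S.proj m k)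
  | node g t ih =>
    show (tupFan (fun j => interp X hX (t j)) ≫ xinv X hX _ ≫ Xmap X g) ≫ napp φ 1
      = napp φ m ≫ tupFan (fun j => interp Y hY (t j)) ≫ xinv Y hY _ ≫ Xmap Y g
    have hg : Xmap X g ≫ napp φ 1 = napp φ _ ≫ Xmap Y g :=
      @NatTrans.naturality Ob S.cat SSet _ X Y φ ⟨_⟩ ⟨1⟩ g
    simp only [Category.assoc]
    rw [hg, ← Category.assoc (xinv X hX _), xinv_nat hX hY φ]
    simp only [← Category.assoc]
    rw [tupFan_finPowMap,
      show (fun j => interp X hX (t j) ≫ napp φ 1)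
        = fun j => napp φ m ≫ interp Y hY (t j) from funext ih,
      tupFan_comp_left]

/-- The extension of a strict algebra to the completion. -/
def extendAlg {S : SemiTheory} (X : S.Diag) (hX : S.IsStrictAlgebra X) :
    (LC S).Diag :=
  @CategoryTheory.Functor.mk Ob (LC S).cat SSet _
      (fun a => Xobj X a.val)
      (fun {a b} F => tupFan (fun k => interpQ X hX (F k)) ≫ xinv X hX b.val)
    (fun a => by
      show tupFan (fun k => Xmap X (S.proj a.val k)) ≫ xinv X hX a.val = _
      rw [← projFan_eq_tupFan, fan_hom_inv])
    (fun {a b c} F G => by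
      show tupFan (fun k => interpQ X hX (qsubst (G k) F)) ≫ xinv X hX c.val = _
      rw [show (fun k => interpQ X hX (qsubst (G k) F))
          = fun k => (tupFan (fun i => interpQ X hX (F i)) ≫ xinv X hX b.val)
              ≫ interpQ X hX (G k) from funext fun k => interpQ_qsubst X hX F (G k),
        tupFan_comp_left]
      simp only [Category.assoc])

theorem tupFan_const_one {S : SemiTheory} (X : S.Diag) {C : SSet} (u : C ⟶ Xobj X 1) :
    tupFan (fun _ : Fin (1 : ℕ+) => u) = u ≫ pf S X 1 := by
  apply NatTrans.ext; funext m
  refine TypeCat.homEquiv.injective (funext fun a => ?_)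
  funext j
  show u.app m a = (Xmap X (S.proj 1 j)).app m (u.app m a)
  rw [proj_one' S j, Xmap_id]
  rfl

theorem extendAlg_map_proj {S : SemiTheory} (X : S.Diag) (hX : S.IsStrictAlgebra X)
    (n : ℕ+) (k : Fin n) :
    Xmap (extendAlg X hX) (LCproj S n k) = Xmap X (S.proj n k) := by
  show tupFan (fun j => interpQ X hX (LCproj S n k j)) ≫ xinv X hX 1 = _
  show tupFan (fun _ : Fin (1 : ℕ+) => Xmap X (S.proj n k)) ≫ xinv X hX 1 = _
  rw [tupFan_const_one, fan_xinv]

theorem extendAlg_strict {S : SemiTheory} (X : S.Diag) (hX : S.IsStrictAlgebra X) :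
    (LC S).IsStrictAlgebra (extendAlg X hX) := by
  intro n hn
  have he : pf (LC S) (extendAlg X hX) n = pf S X n := by
    apply NatTrans.ext; funext m
    refine TypeCat.homEquiv.injective (funext fun a => ?_)
    funext k
    show (Xmap (extendAlg X hX) ((LC S).proj n k)).app m a
      = (Xmap X (S.proj n k)).app m a
    rw [show (LC S).proj n k = LCproj S n k from rfl, extendAlg_map_proj]
    rfl
  show IsIso (pf (LC S) (extendAlg X hX) n)
  rw [he]
  exact fan_isIso X hX n

/-- The extension of a morphism of strict algebras to the completion. -/
def extendAlgMap {S : SemiTheory} {X Y : S.Diag} (hX : S.IsStrictAlgebra X)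
    (hY : S.IsStrictAlgebra Y) (φ : X ⟶ Y) : extendAlg X hX ⟶ extendAlg Y hY :=
  @NatTrans.mk Ob (LC S).cat SSet _ (extendAlg X hX) (extendAlg Y hY)
    (fun a => napp φ a.val)
    (fun a b F => by
      show (tupFan (fun k => interpQ X hX (F k)) ≫ xinv X hX b.val) ≫ napp φ b.val
        = napp φ a.val ≫ tupFan (fun k => interpQ Y hY (F k)) ≫ xinv Y hY b.val
      have hq : ∀ k, interpQ X hX (F k) ≫ napp φ 1
          = napp φ a.val ≫ interpQ Y hY (F k) := fun k => by
        conv_lhs => rw [← Quotient.out_eq (F k)]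
        conv_rhs => rw [← Quotient.out_eq (F k)]
        exact interp_nat hX hY φ (F k).out
      rw [Category.assoc, xinv_nat hX hY φ, ← Category.assoc, tupFan_finPowMap,
        show (fun k => interpQ X hX (F k) ≫ napp φ 1)
          = fun k => napp φ a.val ≫ interpQ Y hY (F k) from funext hq,
        tupFan_comp_left]
      simp only [Category.assoc])

/-! #### The two functors between the strict-algebra categories -/

theorem restrict_fan {S : SemiTheory} (A : (LC S).Diag) (n : ℕ+) :
    pf S ((eta S).restrict A) n = pf (LC S) A n := by
  apply NatTrans.ext; funext m
  refine TypeCat.homEquiv.injective (funext fun a => ?_)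
  funext k
  show (Xmap A (etaMap (S.proj n k))).app m a = (Xmap A ((LC S).proj n k)).app m a
  rw [eta_proj_eq]
  rfl

theorem restrict_strict {S : SemiTheory} (A : (LC S).Diag)
    (hA : (LC S).IsStrictAlgebra A) : S.IsStrictAlgebra ((eta S).restrict A) := by
  intro n hn
  show IsIso (pf S ((eta S).restrict A) n)
  rw [restrict_fan]
  exact hA n hn

theorem restrict_fan_xinv {S : SemiTheory} (A : (LC S).Diag)
    (hA : (LC S).IsStrictAlgebra A) (n : ℕ+) {C D : SSet} (B : C ⟶ Xobj A n)
    (w : Xobj A n ⟶ D) :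
    (B ≫ pf (LC S) A n) ≫ xinv ((eta S).restrict A) (restrict_strict A hA) n
      ≫ w = B ≫ w := by
  rw [← restrict_fan A n]
  exact fan_xinv_assoc ((eta S).restrict A) (restrict_strict A hA) n B w

theorem restrict_fan_xinv' {S : SemiTheory} (A : (LC S).Diag)
    (hA : (LC S).IsStrictAlgebra A) (n : ℕ+) {C : SSet} (B : C ⟶ Xobj A n) :
    (B ≫ pf (LC S) A n)
      ≫ xinv ((eta S).restrict A) (restrict_strict A hA) n = B := by
  rw [← restrict_fan A n]
  exact fan_xinv ((eta S).restrict A) (restrict_strict A hA) n B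

theorem a_tup {S : SemiTheory} (A : (LC S).Diag) {m n : ℕ+} (F : H (LC S) m n) :
    tupFan (fun j => Xmap A (sing (F j))) = Xmap A F ≫ pf (LC S) A n := by
  apply NatTrans.ext; funext x
  refine TypeCat.homEquiv.injective (funext fun a => ?_)
  funext j
  have hc : Xmap A F ≫ Xmap A ((LC S).proj n j) = Xmap A (sing (F j)) := by
    rw [← Xmap_comp]
    exact congrArg (Xmap A) (lc_comp_proj F j)
  exact congrArg (fun (z : Xobj A m ⟶ Xobj A 1) => z.app x a) hc.symm

theorem restr_interp {S : SemiTheory} (A : (LC S).Diag)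
    (hA : (LC S).IsStrictAlgebra A) {m : ℕ+} (t : Tm S m) :
    interp ((eta S).restrict A) (restrict_strict A hA) t
      = Xmap A (sing (⟦t⟧ : Q S m)) := by
  induction t with
  | var k => exact congrArg (Xmap A) (eta_proj_eq S m k)
  | node g t ih =>
    show tupFan (fun j => interp ((eta S).restrict A) (restrict_strict A hA) (t j))
        ≫ xinv ((eta S).restrict A) (restrict_strict A hA) _
        ≫ Xmap ((eta S).restrict A) g
      = Xmap A (sing ⟦Tm.node g t⟧)
    rw [show (fun j => interp ((eta S).restrict A) (restrict_strict A hA) (t j))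
        = fun j => Xmap A (sing (⟦t j⟧ : Q S m)) from funext ih]
    refine (congrArg (fun (z : Xobj A m ⟶ finPow _ (Xobj A 1)) =>
        z ≫ xinv ((eta S).restrict A) (restrict_strict A hA) _ ≫ Xmap ((eta S).restrict A) g)
        (a_tup A (fun i => (⟦t i⟧ : Q S m)))).trans ((restrict_fan_xinv A hA _ _ _).trans ?_)
    show Xmap A (fun i => (⟦t i⟧ : Q S m)) ≫ Xmap A (etaMap g)
      = Xmap A (sing ⟦Tm.node g t⟧)
    exact (Xmap_comp A _ _).symm.trans (congrArg (Xmap A) (sing_node g t))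

theorem eqToHom_conj {C : Type*} [Category C] {X Y : C} (h1 : X = X) (h2 : Y = Y)
    (f g : X ⟶ Y) (h : f = g) : f = eqToHom h1 ≫ g ≫ eqToHom h2 := by
  simp [h]

theorem restrict_extend {S : SemiTheory} (X : S.Diag) (hX : S.IsStrictAlgebra X) :
    (eta S).restrict (extendAlg X hX) = X := by
  refine @CategoryTheory.Functor.ext Ob S.cat SSet _ _ _ (fun a => rfl) ?_
  intro a b f
  show tupFan (fun k => interpQ X hX (etaMap f k)) ≫ xinv X hX b.val = _
  have hk : ∀ k, interpQ X hX (etaMap f k) = Xmap X f ≫ Xmap X (S.proj b.val k) := by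
    intro k
    show interp X hX (.node (hcomp f (S.proj b.val k)) fun i => .var i) = _
    show tupFan (fun i => Xmap X (S.proj a.val i)) ≫ xinv X hX a.val
      ≫ Xmap X (hcomp f (S.proj b.val k)) = _
    rw [← projFan_eq_tupFan, Xmap_comp, ← Category.assoc, fan_hom_inv,
      Category.id_comp]
  rw [show (fun k => interpQ X hX (etaMap f k))
      = fun k => Xmap X f ≫ Xmap X (S.proj b.val k) from funext hk,
    tupFan_projFan, fan_xinv]
  simp
  exact eqToHom_conj _ _ _ _ rfl

theorem extend_restrict {S : SemiTheory} (A : (LC S).Diag)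
    (hA : (LC S).IsStrictAlgebra A) :
    extendAlg ((eta S).restrict A) (restrict_strict A hA) = A := by
  refine @CategoryTheory.Functor.ext Ob (LC S).cat SSet _ _ _ (fun a => rfl) ?_
  intro a b F
  show tupFan (fun k => interpQ ((eta S).restrict A) (restrict_strict A hA) (F k))
      ≫ xinv ((eta S).restrict A) (restrict_strict A hA) b.val = _
  have hk : ∀ k, interpQ ((eta S).restrict A) (restrict_strict A hA) (F k)
      = Xmap A (sing (F k)) := by
    intro k
    conv_lhs => rw [← Quotient.out_eq (F k)]
    conv_rhs => rw [← Quotient.out_eq (F k)]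
    exact restr_interp A hA (F k).out
  rw [show (fun k => interpQ ((eta S).restrict A) (restrict_strict A hA) (F k))
      = fun k => Xmap A (sing (F k)) from funext hk,
    ]
  refine ((congrArg (fun (z : Xobj A a.val ⟶ finPow b.val (Xobj A 1)) =>
      z ≫ xinv ((eta S).restrict A) (restrict_strict A hA) b.val) (a_tup A F)).trans
    (restrict_fan_xinv' A hA _ _)).trans ?_
  exact eqToHom_conj _ _ _ _ rfl

/-- The restriction functor on strict algebras. -/
def Falg (S : SemiTheory) : (LC S).Alg ⥤ S.Alg where
  obj A := ⟨(eta S).restrict A.obj, restrict_strict A.obj A.property⟩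
  map {A B} φ := ObjectProperty.homMk ((eta S).restrictMap φ.hom)
  map_id A := rfl
  map_comp f g := rfl

/-- The extension functor on strict algebras. -/
def Galg (S : SemiTheory) : S.Alg ⥤ (LC S).Alg where
  obj X := ⟨extendAlg X.obj X.property, extendAlg_strict X.obj X.property⟩
  map {X Y} φ := ObjectProperty.homMk (extendAlgMap X.property Y.property φ.hom)
  map_id X := rfl
  map_comp f g := rfl

theorem fullsub_ext {C : Type u} [Category.{v} C] {Z : ObjectProperty C}
    (A B : ObjectProperty.FullSubcategory Z) (h : A.obj = B.obj) : A = B := by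
  cases A; cases B; cases h; rfl

theorem alg_eqToHom {S : SemiTheory} {A B : S.Alg} (h : A = B) :
    (@eqToHom S.Alg (SemiTheory.algCategory S).toCategoryStruct A B h).hom
      = eqToHom (congrArg (fun (Z : S.Alg) => Z.obj) h) := by
  subst h; rfl

theorem alg_conj {S : SemiTheory} {A B A' B' : S.Alg} (hA : A' = A) (hB : B = B')
    (φ : A ⟶ B) :
    (eqToHom hA ≫ φ ≫ eqToHom hB).hom = eqToHom (congrArg (fun (Z : S.Alg) => Z.obj) hA)
      ≫ φ.hom ≫ eqToHom (congrArg (fun (Z : S.Alg) => Z.obj) hB) := by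
  subst hA hB; rfl

theorem diag_comp_app {S : SemiTheory} {X Y Z : S.Diag} (f : X ⟶ Y) (g : Y ⟶ Z)
    (c : Ob) :
    @NatTrans.app Ob S.cat SSet _ X Z (f ≫ g) c
      = @NatTrans.app Ob S.cat SSet _ X Y f c ≫ @NatTrans.app Ob S.cat SSet _ Y Z g c :=
  rfl

theorem diag_eqToHom_app {S : SemiTheory} {X Y : S.Diag} (h : X = Y) (c : Ob) :
    @NatTrans.app Ob S.cat SSet _ X Y (eqToHom h) c
      = eqToHom (congrArg (fun (Z : S.Diag) =>
          @Prefunctor.obj Ob S.cat.toCategoryStruct.toQuiver SSet _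
            (@CategoryTheory.Functor.toPrefunctor Ob S.cat SSet _ Z) c) h) := by
  subst h; rfl

theorem extendAlgMap_restrict {S : SemiTheory} {A B : (LC S).Diag}
    (hA : (LC S).IsStrictAlgebra A) (hB : (LC S).IsStrictAlgebra B) (φ : A ⟶ B) :
    extendAlgMap (restrict_strict A hA) (restrict_strict B hB)
        ((eta S).restrictMap φ)
      = eqToHom (extend_restrict A hA) ≫ φ ≫ eqToHom (extend_restrict B hB).symm := by
  apply NatTrans.ext
  funext c
  rw [diag_comp_app, diag_comp_app, diag_eqToHom_app, diag_eqToHom_app]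
  exact eqToHom_conj _ _ _ _ rfl

theorem restrict_extendAlgMap {S : SemiTheory} {X Y : S.Diag}
    (hX : S.IsStrictAlgebra X) (hY : S.IsStrictAlgebra Y) (φ : X ⟶ Y) :
    (eta S).restrictMap (extendAlgMap hX hY φ)
      = eqToHom (restrict_extend X hX) ≫ φ ≫ eqToHom (restrict_extend Y hY).symm := by
  apply NatTrans.ext
  funext c
  rw [diag_comp_app, diag_comp_app, diag_eqToHom_app, diag_eqToHom_app]
  exact eqToHom_conj _ _ _ _ rfl

theorem eta_inducesAlgebraIso (S : SemiTheory) : (eta S).inducesAlgebraIso := by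
  refine ⟨Falg S, Galg S, fun A => rfl, fun A B φ => ?_, ?_, ?_⟩
  · exact eqToHom_conj _ _ _ _ rfl
  · refine @CategoryTheory.Functor.ext ((LC S).Alg) _ ((LC S).Alg) _ _ _
      (fun A => fullsub_ext _ _ (extend_restrict A.obj A.property)) ?_
    intro A B φ
    apply InducedCategory.Hom.ext
    refine Eq.trans ?_ (alg_conj _ _ _).symm
    show extendAlgMap (restrict_strict A.obj A.property)
      (restrict_strict B.obj B.property) ((eta S).restrictMap φ.hom) = _
    exact extendAlgMap_restrict A.property B.property φ.hom
  · refine @CategoryTheory.Functor.ext (S.Alg) _ (S.Alg) _ _ _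
      (fun X => fullsub_ext _ _ (restrict_extend X.obj X.property)) ?_
    intro X Y φ
    apply InducedCategory.Hom.ext
    refine Eq.trans ?_ (alg_conj _ _ _).symm
    show (eta S).restrictMap (extendAlgMap X.property Y.property φ.hom) = _
    exact restrict_extendAlgMap X.property Y.property φ.hom


end Compl

/-! ### STATEMENT 5
The forgetful functor `R : AlgTh ⟶ SemiTh` from algebraic theories to
semi-theories admits a left adjoint `L`, and for every semi-theory `C` the unit
`η_C : C ⟶ RLC` induces an isomorphism `Alg^{RLC} ≅ Alg^C` of strict-algebra
categories. -/
theorem completion_adjunction_exists :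
    ∃ (L : SemiTheory ⥤ ObjectProperty.FullSubcategory SemiTheory.IsAlgebraic)
      (adj : L ⊣ ObjectProperty.ι SemiTheory.IsAlgebraic),
      ∀ C : SemiTheory, STHom.inducesAlgebraIso (adj.unit.app C) := by
  refine ⟨Adjunction.leftAdjointOfEquiv Compl.homEq Compl.homEq_nat,
    Adjunction.adjunctionOfEquivLeft Compl.homEq Compl.homEq_nat, fun C => ?_⟩
  have hu : (Adjunction.adjunctionOfEquivLeft Compl.homEq Compl.homEq_nat).unit.app C
      = Compl.eta C := by
    show Compl.stcomp (Compl.eta C) (InducedCategory.Hom.hom (𝟙 (Compl.LObj C))) = Compl.eta C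
    exact @Category.comp_id SemiTheory _ C (Compl.LC C) (Compl.eta C)
  rw [hu]
  exact Compl.eta_inducesAlgebraIso C

end SemiThPaper
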